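/- Let ψ be a unit vector and ω a rank-2 density matrix with ψ in the range of ω, ω ≠ |ψ⟩⟨ψ|. Then there exists a real a > 1 such that σ = (1−a)|ψ⟩⟨ψ| + aω is a pure density matrix (rank-1 projection) distinct from |ψ⟩⟨ψ|. -/

import Mathlib

open Matrix
open scoped ComplexOrder

namespace Stmt4Aux

variable {d : ℕ}

noncomputable def nu (z : Fin d → ℂ) : ℝ := ∑ i, Complex.normSq (z i)

lemma nu_nonneg (z : Fin d → ℂ) : 0 ≤ nu z :=
  Finset.sum_nonneg fun _ _ => Complex.normSq_nonneg _

lemma dot_self (z : Fin d → ℂ) : star z ⬝ᵥ z = ((nu z : ℝ) : ℂ) := by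
  simp only [dotProduct, Pi.star_apply, nu]
  push_cast
  refine Finset.sum_congr rfl fun i _ => ?_
  rw [Complex.star_def]
  exact (Complex.normSq_eq_conj_mul_self).symm

lemma dot_star_comm (u v : Fin d → ℂ) : star u ⬝ᵥ v = star (star v ⬝ᵥ u) := by
  simp only [dotProduct, star_sum, star_mul', star_star, Pi.star_apply]
  exact Finset.sum_congr rfl fun i _ => mul_comm _ _

/-- Cauchy–Schwarz for the complex dot product. -/
lemma cs_dot (u v : Fin d → ℂ) :
    ‖star u ⬝ᵥ v‖ ^ 2 ≤ nu u * nu v := by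
  have h := inner_mul_inner_self_le (𝕜 := ℂ)
    ((WithLp.equiv 2 (Fin d → ℂ)).symm u) ((WithLp.equiv 2 (Fin d → ℂ)).symm v)
  have e : ∀ x y : Fin d → ℂ, inner ℂ ((WithLp.equiv 2 (Fin d → ℂ)).symm x)
      ((WithLp.equiv 2 (Fin d → ℂ)).symm y) = star x ⬝ᵥ y := fun x y => by
    rw [dotProduct_comm]; rfl
  rw [e, e, e, e,
    dot_self, dot_self] at h
  have hsw : star v ⬝ᵥ u = star (star u ⬝ᵥ v) := dot_star_comm v u
  rw [hsw, norm_star] at h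
  simpa [sq] using h

/-- trace of `Aᴴ * A` as a sum of norms. -/
lemma trace_conjT_mul (A : Matrix (Fin d) (Fin d) ℂ) :
    (Aᴴ * A).trace = ((∑ j, ∑ i, Complex.normSq (A i j) : ℝ) : ℂ) := by
  simp only [Matrix.trace, Matrix.diag, Matrix.mul_apply, Matrix.conjTranspose_apply]
  push_cast
  refine Finset.sum_congr rfl fun j _ => Finset.sum_congr rfl fun i _ => ?_
  rw [Complex.star_def]
  exact (Complex.normSq_eq_conj_mul_self).symm

lemma trace_mul_vecMulVec (A : Matrix (Fin d) (Fin d) ℂ) (u v : Fin d → ℂ) :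
    (A * Matrix.vecMulVec u v).trace = v ⬝ᵥ (A *ᵥ u) := by
  simp only [Matrix.trace, Matrix.diag, Matrix.mul_apply, Matrix.vecMulVec_apply,
    dotProduct, Matrix.mulVec, Finset.mul_sum]
  exact Finset.sum_congr rfl fun i _ => Finset.sum_congr rfl fun j _ => by ring

lemma vecMulVec_mulVec' (u v x : Fin d → ℂ) :
    Matrix.vecMulVec u v *ᵥ x = (v ⬝ᵥ x) • u := by
  ext i
  simp only [Matrix.mulVec, Matrix.vecMulVec_apply, dotProduct, Pi.smul_apply,
    smul_eq_mul, Finset.sum_mul, Finset.mul_sum]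
  exact Finset.sum_congr rfl fun j _ => by ring

end Stmt4Aux

/-- |ψ⟩⟨ψ| as a matrix. -/
noncomputable def proj {m : Type*} (ψ : m → ℂ) : Matrix m m ℂ :=
  Matrix.vecMulVec ψ (star ψ)

/-- If ψ is a unit vector lying in the range of a rank-2 density matrix
ω ≠ |ψ⟩⟨ψ|, then for some real a > 1, σ = (1−a)|ψ⟩⟨ψ| + aω is a pure
density matrix (positive semidefinite, trace 1, rank 1) distinct from |ψ⟩⟨ψ|. -/
theorem stmt4 {d : ℕ} (ψ : Fin d → ℂ) (hψ : star ψ ⬝ᵥ ψ = 1)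
    (ω : Matrix (Fin d) (Fin d) ℂ) (hω : ω.PosSemidef) (hωtr : ω.trace = 1)
    (hrank : ω.rank = 2)
    (hrange : ψ ∈ LinearMap.range ω.mulVecLin)
    (hne : ω ≠ proj ψ) :
    ∃ a : ℝ, 1 < a ∧
      ((1 - a) • proj ψ + a • ω).PosSemidef ∧
      ((1 - a) • proj ψ + a • ω).trace = 1 ∧
      ((1 - a) • proj ψ + a • ω).rank = 1 ∧
      (1 - a) • proj ψ + a • ω ≠ proj ψ := by
  classical
  have hψ0 : ψ ≠ 0 := by
    intro h; rw [h] at hψ; simpa using hψ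
  obtain ⟨φ, hφ⟩ := hrange
  rw [Matrix.mulVecLin_apply] at hφ
  obtain ⟨B, hB⟩ : ∃ B : Matrix (Fin d) (Fin d) ℂ, ω = Bᴴ * B := by
    open scoped MatrixOrder in exact CStarAlgebra.nonneg_iff_eq_star_mul_self.mp hω.nonneg
  have hform : ∀ x y : Fin d → ℂ, star x ⬝ᵥ (ω *ᵥ y) = star (B *ᵥ x) ⬝ᵥ (B *ᵥ y) := by
    intro x y
    rw [hB, ← Matrix.mulVec_mulVec, Matrix.dotProduct_mulVec, ← Matrix.star_mulVec]
  have hsψ : star ψ = star φ ᵥ* ω := by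
    rw [← hφ, Matrix.star_mulVec, hω.1]
  have hψdot : ∀ x, star ψ ⬝ᵥ x = star (B *ᵥ φ) ⬝ᵥ (B *ᵥ x) := by
    intro x
    rw [hsψ, ← Matrix.dotProduct_mulVec, hform]
  set c := Stmt4Aux.nu (B *ᵥ φ) with hcdef
  set s := Stmt4Aux.nu (B *ᵥ ψ) with hsdef
  have hs : star ψ ⬝ᵥ (ω *ᵥ ψ) = (s : ℂ) := by rw [hform, Stmt4Aux.dot_self]
  have hcval : star φ ⬝ᵥ ψ = (c : ℂ) := by
    rw [← hφ, hform, Stmt4Aux.dot_self]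
  have hone : star (B *ᵥ φ) ⬝ᵥ (B *ᵥ ψ) = 1 := by
    rw [← hform, Matrix.dotProduct_mulVec, ← hsψ, hψ]
  have hcs1 : (1:ℝ) ≤ c * s := by
    have h := Stmt4Aux.cs_dot (B *ᵥ φ) (B *ᵥ ψ)
    rw [hone] at h
    simpa using h
  -- projection facts
  have hPH : (proj ψ)ᴴ = proj ψ := by
    ext i j
    simp [proj, Matrix.vecMulVec_apply, Matrix.conjTranspose_apply, mul_comm]
  have hP2 : proj ψ * proj ψ = proj ψ := by
    ext i k
    simp only [proj, Matrix.mul_apply, Matrix.vecMulVec_apply, Pi.star_apply]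
    calc ∑ j, ψ i * star (ψ j) * (ψ j * star (ψ k))
        = (ψ i * star (ψ k)) * ∑ j, star (ψ j) * ψ j := by
          rw [Finset.mul_sum]; exact Finset.sum_congr rfl fun j _ => by ring
      _ = ψ i * star (ψ k) := by
          rw [show ∑ j, star (ψ j) * ψ j = star ψ ⬝ᵥ ψ from rfl, hψ, mul_one]
  have htrP : (proj ψ).trace = 1 := by
    have h : (proj ψ).trace = star ψ ⬝ᵥ ψ := by
      simp [proj, Matrix.trace, Matrix.diag, Matrix.vecMulVec_apply, dotProduct, mul_comm]
    rw [h, hψ]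
  have htrωP : (ω * proj ψ).trace = (s : ℂ) := by
    rw [proj, Stmt4Aux.trace_mul_vecMulVec, hs]
  have hrankP : (proj ψ).rank ≤ 1 := by
    rw [proj, Matrix.vecMulVec_eq (Fin 1)]
    refine le_trans (Matrix.rank_mul_le_left _ _) ?_
    exact (Matrix.rank_le_card_width (Matrix.replicateCol (Fin 1) ψ)).trans (by simp)
  -- trace of QωQ with Q = 1 - P
  have hBQ : ((B * (1 - proj ψ))ᴴ * (B * (1 - proj ψ))).trace = 1 - (s:ℂ) := by
    have hQH : (1 - proj ψ)ᴴ = 1 - proj ψ := by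
      rw [Matrix.conjTranspose_sub, Matrix.conjTranspose_one, hPH]
    have e1 : (B * (1 - proj ψ))ᴴ * (B * (1 - proj ψ))
        = ω - proj ψ * ω - ω * proj ψ + proj ψ * (ω * proj ψ) := by
      rw [Matrix.conjTranspose_mul, hQH, hB]
      noncomm_ring
    rw [e1, Matrix.trace_add, Matrix.trace_sub, Matrix.trace_sub, hωtr, htrωP,
      Matrix.trace_mul_comm (proj ψ) ω, htrωP,
      Matrix.trace_mul_comm (proj ψ) (ω * proj ψ), Matrix.mul_assoc, hP2, htrωP]
    ring
  have hSg : (1:ℝ) - s = ∑ j, ∑ i, Complex.normSq ((B * (1 - proj ψ)) i j) := by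
    have h := Stmt4Aux.trace_conjT_mul (B * (1 - proj ψ))
    rw [hBQ] at h
    exact_mod_cast h
  have hSg0 : (0:ℝ) ≤ 1 - s := by
    rw [hSg]
    exact Finset.sum_nonneg fun j _ => Finset.sum_nonneg fun i _ => Complex.normSq_nonneg _
  have hs1 : s < 1 := by
    rcases lt_or_eq_of_le (by linarith : s ≤ 1) with h | h
    · exact h
    · exfalso
      have hSgz : ∑ j, ∑ i, Complex.normSq ((B * (1 - proj ψ)) i j) = 0 := by
        rw [← hSg, h]; ring
      have hBQ0 : B * (1 - proj ψ) = 0 := by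
        ext i j
        have h1 := (Finset.sum_eq_zero_iff_of_nonneg
          (fun j _ => Finset.sum_nonneg fun i _ => Complex.normSq_nonneg _)).mp hSgz
        have h2 := (Finset.sum_eq_zero_iff_of_nonneg
          (fun i _ => Complex.normSq_nonneg _)).mp (h1 j (Finset.mem_univ _)) i (Finset.mem_univ _)
        simpa using Complex.normSq_eq_zero.mp h2
      have hωQ : ω * (1 - proj ψ) = 0 := by
        rw [hB, Matrix.mul_assoc, hBQ0, Matrix.mul_zero]
      have hωP : ω = ω * proj ψ := by
        have h3 := hωQ
        rw [Matrix.mul_sub, Matrix.mul_one, sub_eq_zero] at h3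
        exact h3
      have h4 : ω.rank ≤ 1 :=
        hωP ▸ le_trans (Matrix.rank_mul_le_right _ _) hrankP
      omega
  have hsnn : 0 ≤ s := Stmt4Aux.nu_nonneg _
  have hc1 : 1 < c := by
    have hcpos : 0 < c := by nlinarith [Stmt4Aux.nu_nonneg (B *ᵥ φ)]
    nlinarith [mul_pos hcpos (show (0:ℝ) < 1 - s by linarith)]
  set a := c / (c - 1) with hadef
  have hcne : c - 1 ≠ 0 := ne_of_gt (by linarith)
  have ha1 : 1 < a := by
    rw [hadef, lt_div_iff₀ (by linarith)]; linarith
  have hac : (a - 1) * c = a := by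
    rw [hadef]; field_simp; ring
  have hzero : (1 - a) * c + a = 0 := by linear_combination -hac
  -- the candidate matrix
  have hsm : ∀ (r : ℝ) (M : Matrix (Fin d) (Fin d) ℂ), r • M = ((r : ℂ)) • M := by
    intro r M
    ext i j
    simp [Complex.real_smul]
  have hσc : (1 - a) • proj ψ + a • ω = ((1 - a : ℝ) : ℂ) • proj ψ + ((a : ℝ) : ℂ) • ω := by
    rw [hsm, hsm]
  have hσmv : ∀ x, ((1 - a) • proj ψ + a • ω) *ᵥ x
      = ((1 - a : ℝ) : ℂ) • ((star ψ ⬝ᵥ x) • ψ) + ((a : ℝ) : ℂ) • (ω *ᵥ x) := by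
    intro x
    rw [hσc, Matrix.add_mulVec, Matrix.smul_mulVec, Matrix.smul_mulVec, proj,
      Stmt4Aux.vecMulVec_mulVec']
  -- positive semidefinite
  have hpsd : ((1 - a) • proj ψ + a • ω).PosSemidef := by
    rw [Matrix.posSemidef_iff_dotProduct_mulVec]
    refine ⟨?_, ?_⟩
    · show ((1 - a) • proj ψ + a • ω)ᴴ = (1 - a) • proj ψ + a • ω
      rw [hσc, Matrix.conjTranspose_add, Matrix.conjTranspose_smul, Matrix.conjTranspose_smul,
        hPH, hω.1]
      simp [Complex.star_def, Complex.conj_ofReal]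
    · intro x
      rw [hσmv, dotProduct_add, dotProduct_smul, dotProduct_smul,
        dotProduct_smul, hform, Stmt4Aux.dot_self, Stmt4Aux.dot_star_comm x ψ]
      set t := star ψ ⬝ᵥ x with htdef
      have hmc : t • star t = ((Complex.normSq t : ℝ) : ℂ) := by
        rw [smul_eq_mul, Complex.star_def, Complex.mul_conj]
      rw [hmc]
      have hcs := Stmt4Aux.cs_dot (B *ᵥ φ) (B *ᵥ x)
      rw [← hψdot, ← htdef] at hcs
      have hns : Complex.normSq t ≤ c * Stmt4Aux.nu (B *ᵥ x) := by
        calc Complex.normSq t = ‖t‖ ^ 2 := by rw [Complex.sq_norm]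
          _ ≤ _ := hcs
      have hν : 0 ≤ Stmt4Aux.nu (B *ᵥ x) := Stmt4Aux.nu_nonneg _
      have key : 0 ≤ (1 - a) * Complex.normSq t + a * Stmt4Aux.nu (B *ᵥ x) := by
        have h5 : (a - 1) * Complex.normSq t ≤ (a - 1) * (c * Stmt4Aux.nu (B *ᵥ x)) :=
          mul_le_mul_of_nonneg_left hns (by linarith)
        have h6 : (a - 1) * (c * Stmt4Aux.nu (B *ᵥ x)) = a * Stmt4Aux.nu (B *ᵥ x) := by
          linear_combination Stmt4Aux.nu (B *ᵥ x) * hac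
        linarith
      have hrw : ((1 - a : ℝ) : ℂ) • ((Complex.normSq t : ℝ) : ℂ)
            + ((a : ℝ) : ℂ) • ((Stmt4Aux.nu (B *ᵥ x) : ℝ) : ℂ)
          = (((1 - a) * Complex.normSq t + a * Stmt4Aux.nu (B *ᵥ x) : ℝ) : ℂ) := by
        rw [smul_eq_mul, smul_eq_mul]
        push_cast
        ring
      rw [hrw]
      exact Complex.zero_le_real.mpr key
  -- trace
  have htrσ : ((1 - a) • proj ψ + a • ω).trace = 1 := by
    rw [Matrix.trace_add, Matrix.trace_smul, Matrix.trace_smul, htrP, hωtr]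
    simp only [smul_eq_mul, Complex.real_smul, mul_one]
    push_cast
    ring
  -- the key kernel vector
  have hσφ : ((1 - a) • proj ψ + a • ω) *ᵥ φ = 0 := by
    rw [hσmv]
    have h7 : star ψ ⬝ᵥ φ = (c : ℂ) := by
      rw [Stmt4Aux.dot_star_comm, hcval]
      simp [Complex.star_def, Complex.conj_ofReal]
    rw [h7, hφ, smul_smul, ← add_smul]
    have h8 : ((1 - a : ℝ) : ℂ) * (c : ℂ) + ((a : ℝ) : ℂ) = 0 := by
      have h8' := congrArg (fun r : ℝ => (r : ℂ)) hzero
      push_cast at h8' ⊢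
      linear_combination h8'
    rw [h8, zero_smul]
  have hker : ∀ x, ω *ᵥ x = 0 → ((1 - a) • proj ψ + a • ω) *ᵥ x = 0 := by
    intro x hx
    have h9 : star ψ ⬝ᵥ x = 0 := by
      rw [hsψ, ← Matrix.dotProduct_mulVec, hx, dotProduct_zero]
    rw [hσmv, h9, hx]
    simp
  -- rank
  have hrankσ : ((1 - a) • proj ψ + a • ω).rank = 1 := by
    set σ := (1 - a) • proj ψ + a • ω with hσd
    have hKle : LinearMap.ker ω.mulVecLin ⊔ (ℂ ∙ φ) ≤ LinearMap.ker σ.mulVecLin := by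
      apply sup_le
      · intro x hx
        rw [LinearMap.mem_ker, Matrix.mulVecLin_apply] at hx ⊢
        exact hker x hx
      · rw [Submodule.span_le, Set.singleton_subset_iff]
        rw [SetLike.mem_coe, LinearMap.mem_ker, Matrix.mulVecLin_apply]
        exact hσφ
    have hφnk : φ ∉ LinearMap.ker ω.mulVecLin := by
      intro hx
      rw [LinearMap.mem_ker, Matrix.mulVecLin_apply, hφ] at hx
      exact hψ0 hx
    have hlt : LinearMap.ker ω.mulVecLin < LinearMap.ker ω.mulVecLin ⊔ (ℂ ∙ φ) := by
      refine lt_of_le_of_ne le_sup_left fun h => hφnk ?_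
      rw [h]
      exact Submodule.mem_sup_right (Submodule.mem_span_singleton_self φ)
    have h10 := Submodule.finrank_lt_finrank_of_lt hlt
    have h11 := Submodule.finrank_mono hKle
    have h12 := LinearMap.finrank_range_add_finrank_ker ω.mulVecLin
    have h13 := LinearMap.finrank_range_add_finrank_ker σ.mulVecLin
    have hfd : Module.finrank ℂ (Fin d → ℂ) = d := by simp
    rw [hfd] at h12 h13
    have hr1 : ω.rank = Module.finrank ℂ (LinearMap.range ω.mulVecLin) := rfl
    have hr2 : σ.rank = Module.finrank ℂ (LinearMap.range σ.mulVecLin) := rfl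
    -- σ ≠ 0, hence rank ≠ 0
    have hσne : σ.rank ≠ 0 := by
      intro h0
      rw [hr2] at h0
      have hrb : LinearMap.range σ.mulVecLin = ⊥ := Submodule.finrank_eq_zero.mp h0
      have hmv0 : σ.mulVecLin = 0 := LinearMap.range_eq_bot.mp hrb
      have hσ0 : σ = 0 := by
        ext i j
        have := congrFun (congrArg (fun f => f (Pi.single j 1)) (congrArg DFunLike.coe hmv0)) i
        simpa [Matrix.mulVecLin_apply, Matrix.mulVec_single_one] using this
      rw [hσ0] at htrσ
      simp at htrσ
    rw [← hr1, hrank] at h12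
    rw [← hr2] at h13
    omega
  -- distinct from proj ψ
  have hneσ : (1 - a) • proj ψ + a • ω ≠ proj ψ := by
    intro h
    apply hne
    have hA : ((a : ℝ) : ℂ) ≠ 0 := by
      simp only [ne_eq, Complex.ofReal_eq_zero]
      intro h'
      rw [h'] at ha1
      linarith
    have h' := h
    rw [hσc] at h'
    have h'' : ((a : ℝ) : ℂ) • (ω - proj ψ) = 0 := by
      have h3 : (((1 - a : ℝ) : ℂ) • proj ψ + ((a : ℝ) : ℂ) • ω) - proj ψ = 0 :=
        sub_eq_zero.mpr h'
      push_cast at h3 ⊢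
      linear_combination (norm := module) h3
    have h4 : ω - proj ψ = 0 := (smul_eq_zero.mp h'').resolve_left hA
    exact sub_eq_zero.mp h4

  exact ⟨a, ha1, hpsd, htrσ, hrankσ, hneσ⟩
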